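/- arXiv:2205.14835 — 3 statements merged into one kernel-verified Lean document; each statement's English description precedes it below -/
import Mathlib

section
/- Let w ∈ W, s, s' ∈ S, and b ∈ {0,1}. If s'w = ws then φ_{s,b}(s'w) = φ_{s,b}(w); otherwise φ_{s,b}(s'w) = s'·φ_{s,b}(w). Moreover, if w ≤_L s'w (equivalently ℓ(s'w) > ℓ(w)) then φ_{s,b}(w) ≤_L φ_{s,b}(s'w); consequently the map φ_{s,b} : W → W is order-preserving for the left weak order. -/
open Polynomial

namespace Paper

variable {B W : Type*} [Group W] {M : CoxeterMatrix B} (cs : CoxeterSystem M W)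

/-- The standard parabolic subgroup `W_J` generated by the simple reflections in `J`. -/
def WJ (J : Set B) : Subgroup W :=
  Subgroup.closure (cs.simple '' J)

/-- `w` is a minimal-length representative of its right coset `W_J w`, i.e. `w ∈ ᴶW`. -/
def IsMinRep (J : Set B) (w : W) : Prop :=
  ∀ u ∈ WJ cs J, cs.length w ≤ cs.length (u * w)

open scoped Classical in
/-- `w ·_J s`: equals `w * s` if `w * s ∈ ᴶW`, and `w` otherwise. -/
noncomputable def mulJ (J : Set B) (w : W) (i : B) : W :=
  if IsMinRep cs J (w * cs.simple i) then w * cs.simple i else w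

/-- `φ_{J,s,b}` : for `b = 1` the Bruhat-maximum of `{w ·_J s, w}` (equivalently, the longer
of the two), for `b = 0` the Bruhat-minimum (the shorter of the two). -/
noncomputable def phiJ (J : Set B) (i : B) (b : Bool) (w : W) : W :=
  if b then (if cs.length w ≤ cs.length (mulJ cs J w i) then mulJ cs J w i else w)
  else (if cs.length (mulJ cs J w i) ≤ cs.length w then mulJ cs J w i else w)

/-- `φ_{J,σ|_k,b|_k}(w)`: the composition `φ_{J,s_k,b_k} ∘ ⋯ ∘ φ_{J,s_1,b_1}` over the
length-`k` prefix of the word, applied to `w`. -/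
noncomputable def phiJUpTo (J : Set B) {n : ℕ} (σ : Fin n → B) (b : Fin n → Bool)
    (k : ℕ) (w : W) : W :=
  ((List.ofFn fun i : Fin n => ((σ i : B), (b i : Bool))).take k).foldl
    (fun v p => phiJ cs J p.1 p.2 v) w

/-- `φ_{J,σ,b} = φ_{J,s_n,b_n} ∘ ⋯ ∘ φ_{J,s_1,b_1}`. -/
noncomputable def phiJSeq (J : Set B) {n : ℕ} (σ : Fin n → B) (b : Fin n → Bool) (w : W) : W :=
  phiJUpTo cs J σ b n w

/-- `φ_{s,b}(w)`: `max(ws, w)` for `b = 1`, `min(ws, w)` for `b = 0` (in Bruhat order;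
equivalently by length, since `w` and `ws` are Bruhat-comparable). -/
noncomputable def phi (i : B) (b : Bool) (w : W) : W :=
  if b then (if cs.length w ≤ cs.length (w * cs.simple i) then w * cs.simple i else w)
  else (if cs.length (w * cs.simple i) ≤ cs.length w then w * cs.simple i else w)

/-- `φ_{σ|_k,b|_k}(w)` (the case `J = ∅`). -/
noncomputable def phiUpTo {n : ℕ} (σ : Fin n → B) (b : Fin n → Bool) (k : ℕ) (w : W) : W :=
  ((List.ofFn fun i : Fin n => ((σ i : B), (b i : Bool))).take k).foldl
    (fun v p => phi cs p.1 p.2 v) w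

/-- `φ_{σ,b}(w)` (the case `J = ∅`). -/
noncomputable def phiSeq {n : ℕ} (σ : Fin n → B) (b : Fin n → Bool) (w : W) : W :=
  phiUpTo cs σ b n w

/-- `b` is a `(σ,J)`-good word for `w`: `φ_{σ,b}(w) = w`, and for each left descent
`s ∈ D_L(w) ∩ J` there is a position `i` with
`φ_{σ|_{i-1},b|_{i-1}}(w) · s_i = s · φ_{σ|_{i-1},b|_{i-1}}(w)`. -/
def Good (J : Set B) {n : ℕ} (σ : Fin n → B) (w : W) (b : Fin n → Bool) : Prop :=
  phiSeq cs σ b w = w ∧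
  ∀ i0 ∈ J, cs.length (cs.simple i0 * w) < cs.length w →
    ∃ i : Fin n,
      cs.simple i0 * phiUpTo cs σ b (i : ℕ) w = phiUpTo cs σ b (i : ℕ) w * cs.simple (σ i)

/-- `|b| = b_1 + ⋯ + b_n`. -/
def wt {n : ℕ} (b : Fin n → Bool) : ℕ := ∑ i, if b i then 1 else 0

/-- Left weak order: `w' ≤_L w` iff `w = u * w'` with `ℓ(w) = ℓ(u) + ℓ(w')`. -/
def leL (w' w : W) : Prop :=
  ∃ u : W, w = u * w' ∧ cs.length w = cs.length u + cs.length w'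

end Paper

namespace Paper

open CoxeterSystem

section SgnPerm

variable {G : Type*} [Group G]

open scoped Classical in
/-- Tits' sign permutation associated to a group element. -/
noncomputable def sgnPerm (g : G) : Equiv.Perm (G × ℤˣ) where
  toFun x := (g * x.1 * g⁻¹, if x.1 = g then -x.2 else x.2)
  invFun x := (g⁻¹ * x.1 * g, if x.1 = g then -x.2 else x.2)
  left_inv := by
    rintro ⟨t, e⟩
    by_cases h : t = g
    · subst h; simp
    · have h2 : g * t * g⁻¹ ≠ g := fun hc => h (by
        have := congrArg (fun z => g⁻¹ * z * g) hc
        simpa [mul_assoc] using this)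
      simp only [if_neg h, if_neg h2]
      refine Prod.ext ?_ rfl
      simp [mul_assoc]
  right_inv := by
    rintro ⟨t, e⟩
    by_cases h : t = g
    · subst h; simp
    · have h2 : g⁻¹ * t * g ≠ g := fun hc => h (by
        have := congrArg (fun z => g * z * g⁻¹) hc
        simpa [mul_assoc] using this)
      simp only [if_neg h, if_neg h2]
      refine Prod.ext ?_ rfl
      simp [← mul_assoc]

open scoped Classical in
theorem sgnPerm_apply (g : G) (x : G × ℤˣ) :
    sgnPerm g x = (g * x.1 * g⁻¹, if x.1 = g then -x.2 else x.2) := rfl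

private theorem conj_eq_iff {g c t : G} : g * t * g⁻¹ = c ↔ t = g⁻¹ * c * g := by
  constructor
  · rintro rfl; group
  · rintro rfl; group

variable {a b : G} (ha : a * a = 1) (hb : b * b = 1)

include ha hb

private theorem sgn_aux1 (r : ℕ) : b * (a * b) ^ r = ((a * b) ^ r)⁻¹ * b := by
  have ia : a⁻¹ = a := inv_eq_of_mul_eq_one_right ha
  have ib : b⁻¹ = b := inv_eq_of_mul_eq_one_right hb
  induction r with
  | zero => simp
  | succ r ih =>
    have base : b * (a * b) = (a * b)⁻¹ * b := by
      rw [mul_inv_rev, ia, ib]; group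
    rw [pow_succ, ← mul_assoc, ih, mul_assoc, base, ← mul_assoc, ← mul_inv_rev, ← pow_succ', ← pow_succ]

private theorem sgn_aux2 (r : ℕ) {t : G} :
    (a * b) ^ r * t * ((a * b) ^ r)⁻¹ = b ↔ t = ((a * b) ^ (2 * r))⁻¹ * b := by
  have key : ((a * b) ^ r)⁻¹ * b * (a * b) ^ r = ((a * b) ^ (2 * r))⁻¹ * b := by
    rw [mul_assoc, sgn_aux1 ha hb r, two_mul, pow_add, mul_inv_rev, ← mul_assoc]
  rw [conj_eq_iff, key]

private theorem sgn_aux3 (r : ℕ) {t : G} :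
    b * ((a * b) ^ r * t * ((a * b) ^ r)⁻¹) * b⁻¹ = a
      ↔ t = ((a * b) ^ (2 * r + 1))⁻¹ * b := by
  have ib : b⁻¹ = b := inv_eq_of_mul_eq_one_right hb
  have key : ((a * b) ^ r)⁻¹ * (b⁻¹ * a * b) * (a * b) ^ r
      = ((a * b) ^ (2 * r + 1))⁻¹ * b := by
    rw [ib, mul_assoc b a b, mul_assoc ((a*b)^r)⁻¹ (b * (a*b)) ((a*b)^r),
      mul_assoc b (a*b) ((a*b)^r), ← pow_succ', sgn_aux1 ha hb (r+1),
      show 2 * r + 1 = (r+1) + r by omega, pow_add, mul_inv_rev, ← mul_assoc]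
    group
  rw [conj_eq_iff, conj_eq_iff, key]

open scoped Classical in
private theorem sgnPerm_pow_apply (k : ℕ) (x : G × ℤˣ) :
    ((sgnPerm a * sgnPerm b) ^ k) x
      = ((a * b) ^ k * x.1 * ((a * b) ^ k)⁻¹,
          x.2 * ∏ r ∈ Finset.range (2 * k),
            (if x.1 = ((a * b) ^ r)⁻¹ * b then (-1 : ℤˣ) else 1)) := by
  induction k with
  | zero => simp
  | succ k ih =>
    rw [pow_succ', Equiv.Perm.mul_apply, ih, Equiv.Perm.mul_apply,
      sgnPerm_apply, sgnPerm_apply]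
    dsimp only
    simp only [sgn_aux2 ha hb, sgn_aux3 ha hb]
    rw [show 2 * (k + 1) = (2 * k) + 1 + 1 by omega, Finset.prod_range_succ,
      Finset.prod_range_succ]
    simp only [Prod.mk.injEq]
    refine ⟨?_, ?_⟩
    · rw [pow_succ', mul_inv_rev, mul_inv_rev]
      simp only [mul_assoc]
    · by_cases h1 : x.1 = ((a * b) ^ (2 * k))⁻¹ * b <;>
        by_cases h2 : x.1 = ((a * b) ^ (2 * k + 1))⁻¹ * b <;>
        simp [h1, h2, mul_assoc]

open scoped Classical in
private theorem sgnPerm_pow_rel (m : ℕ) (hm : (a * b) ^ m = 1) :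
    (sgnPerm a * sgnPerm b) ^ m = 1 := by
  apply Equiv.ext
  rintro ⟨x1, x2⟩
  rw [Equiv.Perm.one_apply, sgnPerm_pow_apply ha hb m _, hm]
  simp only [one_mul, inv_one, mul_one]
  simp only [Prod.mk.injEq]
  refine ⟨trivial, ?_⟩
  rw [two_mul, Finset.prod_range_add]
  have hcg : ∀ r ∈ Finset.range m,
      (if x1 = ((a * b) ^ (m + r))⁻¹ * b then (-1 : ℤˣ) else 1)
        = (if x1 = ((a * b) ^ r)⁻¹ * b then (-1 : ℤˣ) else 1) := by
    intro r _
    have : (a * b) ^ (m + r) = (a * b) ^ r := by rw [pow_add, hm, one_mul]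
    rw [this]
  rw [Finset.prod_congr rfl hcg, Int.units_mul_self, mul_one]

end SgnPerm

section CoxAux

open scoped Classical

variable {B W : Type*} [Group W] {M : CoxeterMatrix B} (cs : CoxeterSystem M W)

private theorem sgn_liftable : M.IsLiftable (fun k => sgnPerm (cs.simple k)) := by
  intro i i'
  exact sgnPerm_pow_rel (cs.simple_mul_simple_self i) (cs.simple_mul_simple_self i')
    (M i i') (cs.simple_mul_simple_pow i i')

/-- Tits' sign homomorphism. -/
noncomputable def mu : W →* Equiv.Perm (W × ℤˣ) :=
  cs.lift ⟨fun k => sgnPerm (cs.simple k), sgn_liftable cs⟩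

private theorem mu_simple (k : B) : mu cs (cs.simple k) = sgnPerm (cs.simple k) :=
  cs.lift_apply_simple _ k

private theorem mu_word (ω : List B) (t : W) (e : ℤˣ) :
    mu cs (cs.wordProd ω) (t, e)
      = (cs.wordProd ω * t * (cs.wordProd ω)⁻¹,
          e * (-1) ^ ((cs.rightInvSeq ω).count t)) := by
  induction ω generalizing e with
  | nil => simp [CoxeterSystem.wordProd_nil, CoxeterSystem.rightInvSeq]
  | cons i ω ih =>
    rw [CoxeterSystem.wordProd_cons, map_mul, Equiv.Perm.mul_apply, ih, mu_simple,
      sgnPerm_apply]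
    dsimp only
    have hris : cs.rightInvSeq (i :: ω)
        = ((cs.wordProd ω)⁻¹ * cs.simple i * cs.wordProd ω) :: cs.rightInvSeq ω := rfl
    rw [hris, List.count_cons]
    simp only [Prod.mk.injEq]
    refine ⟨?_, ?_⟩
    · rw [mul_inv_rev, cs.inv_simple]
      simp only [mul_assoc]
    · rw [conj_eq_iff]
      by_cases h : t = (cs.wordProd ω)⁻¹ * cs.simple i * cs.wordProd ω
      · rw [if_pos h, if_pos (by simpa using h.symm), pow_succ, ← mul_assoc, mul_neg_one]
      · rw [if_neg h, if_neg (by simpa using (fun hc => h hc.symm)), add_zero]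

/-- The sign cocycle. -/
noncomputable def nu (w t : W) : ℤˣ := (mu cs w (t, 1)).2

private theorem mu_apply (w t : W) (e : ℤˣ) :
    mu cs w (t, e) = (w * t * w⁻¹, e * nu cs w t) := by
  obtain ⟨ω, rfl⟩ := cs.wordProd_surjective w
  rw [mu_word, nu, mu_word]
  dsimp only
  rw [one_mul]

private theorem nu_neg_iff (w : W) (i : B) :
    nu cs w (cs.simple i) = -1 ↔ cs.length (w * cs.simple i) < cs.length w := by
  constructor
  · intro h
    obtain ⟨ω, hred, rfl⟩ := cs.exists_reduced_word' w
    rw [nu, mu_word] at h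
    dsimp only at h
    rw [one_mul] at h
    have hodd : Odd ((cs.rightInvSeq ω).count (cs.simple i)) := by
      by_contra hev
      rw [Nat.not_odd_iff_even.mp hev |>.neg_one_pow] at h
      exact absurd h (by decide)
    have hmem : cs.simple i ∈ cs.rightInvSeq ω := by
      apply List.count_pos_iff.mp
      obtain ⟨k, hk⟩ := hodd
      omega
    exact (cs.isRightInversion_of_mem_rightInvSeq hred hmem).2
  · intro h
    obtain ⟨ω', hlen, hw'⟩ := cs.exists_reduced_word (w * cs.simple i)
    have hπ : cs.wordProd (ω'.concat i) = w := by
      rw [CoxeterSystem.wordProd_concat, ← hw', cs.simple_mul_simple_cancel_right]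
    have hred : cs.IsReduced (ω'.concat i) := by
      unfold CoxeterSystem.IsReduced
      rw [hπ, List.length_concat, ← (hlen : cs.length (cs.wordProd ω') = ω'.length), ← hw']
      rcases cs.length_mul_simple w i with h1 | h1 <;> omega
    have hmem : cs.simple i ∈ cs.rightInvSeq (ω'.concat i) := by
      rw [cs.rightInvSeq_concat]
      simp
    have hcount : (cs.rightInvSeq (ω'.concat i)).count (cs.simple i) = 1 :=
      List.count_eq_one_of_mem (hred.nodup_rightInvSeq) hmem
    rw [nu, ← hπ, mu_word]
    dsimp only
    rw [one_mul, hcount, pow_one]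

/-- Key "lifting" lemma: left multiplication by a simple reflection `s'` preserves the
right-descent status at `s`, unless `s'w = ws`. -/
theorem length_mul_simple_lt_iff_of_ne (i i' : B) (w : W)
    (hne : cs.simple i' * w ≠ w * cs.simple i) :
    cs.length (w * cs.simple i) < cs.length w ↔
      cs.length (cs.simple i' * w * cs.simple i) < cs.length (cs.simple i' * w) := by
  have hnu : nu cs (cs.simple i' * w) (cs.simple i) = nu cs w (cs.simple i) := by
    rw [nu, map_mul, Equiv.Perm.mul_apply, mu_apply cs w, mu_simple, sgnPerm_apply]
    have hc : ¬ (w * cs.simple i * w⁻¹ = cs.simple i') := by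
      intro hc
      exact hne ((mul_inv_eq_iff_eq_mul.mp hc).symm)
    dsimp only
    rw [one_mul, if_neg hc]
  rw [← nu_neg_iff, ← nu_neg_iff, hnu]

end CoxAux

end Paper

namespace Paper

variable {B W : Type*} [Group W] {M : CoxeterMatrix B} (cs : CoxeterSystem M W)

theorem leL_refl (v : W) : leL cs v v :=
  ⟨1, (one_mul v).symm, by simp⟩

theorem leL_trans {x y z : W} (h1 : leL cs x y) (h2 : leL cs y z) : leL cs x z := by
  obtain ⟨u1, rfl, hl1⟩ := h1
  obtain ⟨u2, rfl, hl2⟩ := h2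
  refine ⟨u2 * u1, (mul_assoc u2 u1 x).symm, ?_⟩
  have hle : cs.length (u2 * u1) ≤ cs.length u2 + cs.length u1 := cs.length_mul_le u2 u1
  have hge : cs.length (u2 * (u1 * x)) ≤ cs.length (u2 * u1) + cs.length x := by
    rw [← mul_assoc]
    exact cs.length_mul_le (u2 * u1) x
  omega

theorem phi_eq_of_comm (i i' : B) (b : Bool) (w : W)
    (h : cs.simple i' * w = w * cs.simple i) :
    phi cs i b (cs.simple i' * w) = phi cs i b w := by
  have hw : cs.simple i' * w * cs.simple i = w := by
    rw [h, cs.simple_mul_simple_cancel_right]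
  have hne := cs.length_mul_simple_ne w i
  unfold phi
  rw [hw, h]
  by_cases hle : cs.length (w * cs.simple i) ≤ cs.length w
  · have hnle : ¬ cs.length w ≤ cs.length (w * cs.simple i) := by omega
    cases b <;> simp [hle, hnle]
  · have hnle : cs.length w ≤ cs.length (w * cs.simple i) := by omega
    cases b <;> simp [hle, hnle]

theorem phi_smul_of_ne (i i' : B) (b : Bool) (w : W)
    (hne : cs.simple i' * w ≠ w * cs.simple i) :
    phi cs i b (cs.simple i' * w) = cs.simple i' * phi cs i b w := by
  have key := length_mul_simple_lt_iff_of_ne cs i i' w hne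
  have h2 := cs.length_mul_simple_ne (cs.simple i' * w) i
  rw [mul_assoc] at key h2
  have h1 := cs.length_mul_simple_ne w i
  unfold phi
  by_cases hle : cs.length w ≤ cs.length (w * cs.simple i)
  · have hle' : cs.length (cs.simple i' * w) ≤ cs.length (cs.simple i' * (w * cs.simple i)) :=
      Nat.le_of_not_lt (fun hc => (Nat.not_lt.mpr hle) (key.mpr hc))
    have hn : ¬ cs.length (w * cs.simple i) ≤ cs.length w := by omega
    have hn' : ¬ cs.length (cs.simple i' * (w * cs.simple i)) ≤ cs.length (cs.simple i' * w) := by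
      omega
    cases b <;> simp [hle, hle', hn, hn', mul_assoc]
  · have hlt : cs.length (w * cs.simple i) < cs.length w := by omega
    have hlt' := key.mp hlt
    have ha : cs.length (w * cs.simple i) ≤ cs.length w := by omega
    have ha' : cs.length (cs.simple i' * (w * cs.simple i)) ≤ cs.length (cs.simple i' * w) := by
      omega
    have hn' : ¬ cs.length (cs.simple i' * w) ≤ cs.length (cs.simple i' * (w * cs.simple i)) := by
      omega
    cases b <;> simp [hle, ha, ha', hn', mul_assoc]

theorem phi_mem (i : B) (b : Bool) (w : W) :
    phi cs i b w = w ∨ phi cs i b w = w * cs.simple i := by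
  unfold phi
  split_ifs <;> tauto

theorem length_simple_smul_phi (i i' : B) (b : Bool) (w : W)
    (hne : cs.simple i' * w ≠ w * cs.simple i)
    (hlen : cs.length (cs.simple i' * w) = 1 + cs.length w) :
    cs.length (cs.simple i' * phi cs i b w) = 1 + cs.length (phi cs i b w) := by
  rcases phi_mem cs i b w with h | h
  · rw [h]; exact hlen
  · rw [h, ← mul_assoc]
    have key := length_mul_simple_lt_iff_of_ne cs i i' w hne
    rcases cs.length_mul_simple w i with hA | hA <;>
      rcases cs.length_mul_simple (cs.simple i' * w) i with hB | hB
    · omega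
    · have := key.mpr (by omega); omega
    · have := key.mp (by omega); omega
    · omega

theorem phi_leL_smul (i i' : B) (b : Bool) (w : W)
    (h : leL cs w (cs.simple i' * w)) :
    leL cs (phi cs i b w) (phi cs i b (cs.simple i' * w)) := by
  obtain ⟨u, hu, hl⟩ := h
  have hu' : u = cs.simple i' := mul_right_cancel hu.symm
  subst hu'
  rw [cs.length_simple] at hl
  by_cases hc : cs.simple i' * w = w * cs.simple i
  · rw [phi_eq_of_comm cs i i' b w hc]
    exact leL_refl cs _
  · rw [phi_smul_of_ne cs i i' b w hc]
    exact ⟨cs.simple i', rfl, by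
      rw [cs.length_simple]
      exact length_simple_smul_phi cs i i' b w hc (by omega)⟩

theorem phi_mono (i : B) (b : Bool) (v v' : W) (h : leL cs v v') :
    leL cs (phi cs i b v) (phi cs i b v') := by
  obtain ⟨u, rfl, hl⟩ := h
  have main : ∀ n u, cs.length u = n → cs.length (u * v) = cs.length u + cs.length v →
      leL cs (phi cs i b v) (phi cs i b (u * v)) := by
    intro n
    induction n with
    | zero =>
      intro u hu _
      have h1 : u = 1 := cs.length_eq_zero_iff.mp hu
      subst h1
      rw [one_mul]
      exact leL_refl cs _
    | succ n ih =>
      intro u hu hlen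
      have hne1 : u ≠ 1 := by
        intro h1; rw [h1, cs.length_one] at hu; omega
      obtain ⟨j, hdesc⟩ := cs.exists_leftDescent_of_ne_one hne1
      have hdesc' : cs.length (cs.simple j * u) < cs.length u := hdesc
      set u0 := cs.simple j * u with hu0
      have huu : cs.simple j * u0 = u := by rw [hu0, cs.simple_mul_simple_cancel_left]
      have hlu0 : cs.length u0 = n := by
        rcases cs.length_simple_mul u0 j with hA | hA <;> rw [huu] at hA <;> omega
      have hl0 : cs.length (u0 * v) = cs.length u0 + cs.length v := by
        have upper := cs.length_mul_le u0 v
        have lower : cs.length (u * v) ≤ cs.length (u0 * v) + 1 := by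
          have hj : cs.simple j * (u0 * v) = u * v := by rw [← mul_assoc, huu]
          rcases cs.length_simple_mul (u0 * v) j with hA | hA <;> rw [hj] at hA <;> omega
        omega
      have step1 := ih u0 hlu0 hl0
      have hll : leL cs (u0 * v) (cs.simple j * (u0 * v)) := by
        refine ⟨cs.simple j, rfl, ?_⟩
        rw [cs.length_simple, ← mul_assoc, huu]
        omega
      have step2 := phi_leL_smul cs i j b (u0 * v) hll
      rw [← mul_assoc, huu] at step2
      exact leL_trans cs step1 step2
  exact main (cs.length u) u rfl hl

end Paper


namespace Paper

/-- For `w ∈ W`, `s, s' ∈ S` and `b ∈ {0,1}`: if `s'w = ws` then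
`φ_{s,b}(s'w) = φ_{s,b}(w)`, and otherwise `φ_{s,b}(s'w) = s'·φ_{s,b}(w)`. Moreover, if
`w ≤_L s'w` then `φ_{s,b}(w) ≤_L φ_{s,b}(s'w)`; consequently `φ_{s,b} : W → W` is
order-preserving for the left weak order. -/
theorem phi_mul_simple_left {B W : Type*} [Group W] {M : CoxeterMatrix B}
    (cs : CoxeterSystem M W) (i i' : B) (b : Bool) (w : W) :
    (cs.simple i' * w = w * cs.simple i →
      phi cs i b (cs.simple i' * w) = phi cs i b w) ∧
    (cs.simple i' * w ≠ w * cs.simple i →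
      phi cs i b (cs.simple i' * w) = cs.simple i' * phi cs i b w) ∧
    (leL cs w (cs.simple i' * w) →
      leL cs (phi cs i b w) (phi cs i b (cs.simple i' * w))) ∧
    (∀ v v' : W, leL cs v v' → leL cs (phi cs i b v) (phi cs i b v')) := by
  refine ⟨phi_eq_of_comm cs i i' b w, phi_smul_of_ne cs i i' b w,
    phi_leL_smul cs i i' b w, phi_mono cs i b⟩

end Paper
end

section
/- Let J ⊆ S, w̄ ∈ ^JW, σ = (s_1,…,s_n) a word in S, and b ∈ {0,1}^n. Then for every u ∈ W_J one has φ_{σ,b}(u w̄) ∈ W_J · φ_{J,σ,b}(w̄). In particular, if φ_{J,σ,b}(w̄) = w̄, then φ_{σ,b} maps the coset W_J w̄ into itself. -/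
open Polynomial

namespace Paper

set_option linter.unusedSectionVars false

open List CoxeterSystem

section Aux

variable {B W : Type*} [Group W] {M : CoxeterMatrix B} (cs : CoxeterSystem M W)



private lemma simple_conj_conj (i : B) (t : W) :
    cs.simple i * (cs.simple i * t * cs.simple i) * cs.simple i = t := by
  rw [show cs.simple i * (cs.simple i * t * cs.simple i) * cs.simple i
      = (cs.simple i * cs.simple i) * t * (cs.simple i * cs.simple i) by group,
    cs.simple_mul_simple_self, one_mul, mul_one]

open scoped Classical in
/-- The underlying function of the reflection-sign permutation. -/
noncomputable def etaF (i : B) : W × ℤˣ → W × ℤˣ :=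
  fun x => (cs.simple i * x.1 * cs.simple i, if x.1 = cs.simple i then -x.2 else x.2)

lemma etaF_involutive (i : B) : Function.Involutive (etaF cs i) := by
  rintro ⟨t, ε⟩
  unfold etaF
  dsimp only
  by_cases h : t = cs.simple i
  · subst h
    have h2 : cs.simple i * cs.simple i * cs.simple i = cs.simple i := by
      rw [cs.simple_mul_simple_self, one_mul]
    simp [h2]
  · have h2 : cs.simple i * t * cs.simple i ≠ cs.simple i := by
      intro hc
      apply h
      have h3 := simple_conj_conj cs i t
      rw [hc] at h3
      rw [← h3, cs.simple_mul_simple_self, one_mul]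
    simp only [if_neg h, if_neg h2, simple_conj_conj]

/-- The permutation of `W × ℤˣ` associated to a simple reflection. -/
noncomputable def eta (i : B) : Equiv.Perm (W × ℤˣ) :=
  Function.Involutive.toPerm _ (etaF_involutive cs i)

open scoped Classical in
lemma eta_apply (i : B) (t : W) (ε : ℤˣ) :
    eta cs i (t, ε) = (cs.simple i * t * cs.simple i, if t = cs.simple i then -ε else ε) := rfl

open scoped Classical in
/-- The sign `(-1)^(multiplicity of t in l)`. -/
noncomputable def sgnl (t : W) (l : List W) : ℤˣ :=
  (l.map fun x => if x = t then (-1 : ℤˣ) else 1).prod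

lemma sgnl_nil (t : W) : sgnl t ([] : List W) = 1 := rfl

open scoped Classical in
lemma sgnl_cons (t x : W) (l : List W) :
    sgnl t (x :: l) = (if x = t then (-1 : ℤˣ) else 1) * sgnl t l := by
  simp [sgnl]

lemma sgnl_append (t : W) (l₁ l₂ : List W) :
    sgnl t (l₁ ++ l₂) = sgnl t l₁ * sgnl t l₂ := by
  simp [sgnl]

lemma sgnl_of_not_mem {t : W} {l : List W} (h : t ∉ l) : sgnl t l = 1 := by
  induction l with
  | nil => rfl
  | cons x l ih =>
    rw [sgnl_cons, if_neg (fun hx => h (by subst hx; exact mem_cons_self)), one_mul]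
    exact ih fun hm => h (mem_cons_of_mem _ hm)

lemma sgnl_of_nodup_mem {t : W} {l : List W} (hl : l.Nodup) (h : t ∈ l) : sgnl t l = -1 := by
  induction l with
  | nil => cases h
  | cons x l ih =>
    rw [sgnl_cons]
    rcases List.mem_cons.mp h with rfl | hm
    · rw [if_pos rfl, sgnl_of_not_mem (List.nodup_cons.mp hl).1, mul_one]
    · have hx : x ≠ t := by rintro rfl; exact (List.nodup_cons.mp hl).1 hm
      rw [if_neg hx, one_mul, ih (List.nodup_cons.mp hl).2 hm]

private lemma semiconj_pow (x y : W) (a : ℕ) : y * (x * y) ^ a = (y * x) ^ a * y := by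
  induction a with
  | zero => simp
  | succ a ih =>
    calc y * (x * y) ^ (a + 1) = (y * x) * (y * (x * y) ^ a) := by
          rw [pow_succ']; simp [mul_assoc]
    _ = (y * x) * ((y * x) ^ a * y) := by rw [ih]
    _ = (y * x) ^ (a + 1) * y := by rw [pow_succ']; simp [mul_assoc]


private lemma conj_eq_iff_s3 (P z t : W) : (P * t * P⁻¹ = z) ↔ (t = P⁻¹ * z * P) := by
  constructor
  · rintro rfl; group
  · rintro rfl; group

private lemma conj_simple_iff (jj : B) (x z : W) :
    (cs.simple jj * x * cs.simple jj = z) ↔ (x = cs.simple jj * z * cs.simple jj) := by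
  constructor
  · rintro rfl; exact (simple_conj_conj cs jj x).symm
  · rintro rfl; exact simple_conj_conj cs jj z

private lemma conj_step (i j : B) (P t : W) :
    cs.simple i * (cs.simple j * (P * t * P⁻¹) * cs.simple j) * cs.simple i
      = (cs.simple i * cs.simple j * P) * t * (cs.simple i * cs.simple j * P)⁻¹ := by
  rw [mul_inv_rev, mul_inv_rev, cs.inv_simple, cs.inv_simple]
  group

private lemma sign_juggle {P Q : Prop} [Decidable P] [Decidable Q] (e S : ℤˣ) :
    (if Q then -(if P then -(e * S) else e * S) else (if P then -(e * S) else e * S))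
      = e * (S * ((if P then (-1 : ℤˣ) else 1) * 1) * ((if Q then (-1 : ℤˣ) else 1) * 1)) := by
  by_cases hP : P <;> by_cases hQ : Q <;>
    simp [hP, hQ, mul_neg, neg_mul, neg_neg, mul_comm, mul_left_comm, mul_assoc]

open scoped Classical in
lemma eta_pair_pow (i j : B) (q : ℕ) (t : W) (ε : ℤˣ) :
    ((eta cs i * eta cs j) ^ q) (t, ε) =
      ((cs.simple i * cs.simple j) ^ q * t * ((cs.simple i * cs.simple j) ^ q)⁻¹,
        ε * sgnl t ((List.range (2 * q)).map
          fun a => ((cs.simple j * cs.simple i) ^ a : W) * cs.simple j)) := by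
  induction q with
  | zero => simp [sgnl]
  | succ q ih =>
    have hrq : (((cs.simple i * cs.simple j : W) ^ q)⁻¹ : W)
        = (cs.simple j * cs.simple i) ^ q := by
      rw [← inv_pow, mul_inv_rev, cs.inv_simple, cs.inv_simple]
    have e1 : ((cs.simple i * cs.simple j : W) ^ q)⁻¹ * cs.simple j
          * (cs.simple i * cs.simple j) ^ q
        = (cs.simple j * cs.simple i) ^ (2 * q) * cs.simple j := by
      rw [hrq, mul_assoc, semiconj_pow, ← mul_assoc, ← pow_add, two_mul]
    have e2 : ((cs.simple i * cs.simple j : W) ^ q)⁻¹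
          * (cs.simple j * cs.simple i * cs.simple j) * (cs.simple i * cs.simple j) ^ q
        = (cs.simple j * cs.simple i) ^ (2 * q + 1) * cs.simple j := by
      rw [hrq]
      calc (cs.simple j * cs.simple i) ^ q * (cs.simple j * cs.simple i * cs.simple j)
            * (cs.simple i * cs.simple j) ^ q
          = (cs.simple j * cs.simple i) ^ q * (cs.simple j * cs.simple i)
            * (cs.simple j * (cs.simple i * cs.simple j) ^ q) := by
            simp [mul_assoc]
        _ = (cs.simple j * cs.simple i) ^ q * (cs.simple j * cs.simple i)
            * ((cs.simple j * cs.simple i) ^ q * cs.simple j) := by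
            rw [semiconj_pow]
        _ = (cs.simple j * cs.simple i) ^ (2 * q + 1) * cs.simple j := by
            rw [← pow_succ, ← mul_assoc, ← pow_add]
            congr 2
            omega
    have hrange : (List.range (2 * (q + 1))).map
          (fun a => ((cs.simple j * cs.simple i) ^ a : W) * cs.simple j)
        = ((List.range (2 * q)).map
            (fun a => ((cs.simple j * cs.simple i) ^ a : W) * cs.simple j))
          ++ [(cs.simple j * cs.simple i) ^ (2 * q) * cs.simple j]
          ++ [(cs.simple j * cs.simple i) ^ (2 * q + 1) * cs.simple j] := by
      rw [show 2 * (q + 1) = (2 * q) + 1 + 1 by ring, List.range_succ, List.range_succ]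
      simp
    rw [pow_succ', Equiv.Perm.mul_apply, ih, Equiv.Perm.mul_apply, eta_apply cs j,
      eta_apply cs i, hrange, sgnl_append, sgnl_append, conj_step,
      pow_succ' (cs.simple i * cs.simple j) q]
    have hc1 : ((cs.simple i * cs.simple j) ^ q * t * (((cs.simple i * cs.simple j) ^ q)⁻¹)
          = cs.simple j)
        ↔ (cs.simple j * cs.simple i) ^ (2 * q) * cs.simple j = t := by
      rw [conj_eq_iff_s3, e1, eq_comm]
    have hc2 : (cs.simple j * ((cs.simple i * cs.simple j) ^ q * t
          * (((cs.simple i * cs.simple j) ^ q)⁻¹)) * cs.simple j = cs.simple i)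
        ↔ (cs.simple j * cs.simple i) ^ (2 * q + 1) * cs.simple j = t := by
      rw [conj_simple_iff, conj_eq_iff_s3, e2, eq_comm]
    rw [Prod.mk.injEq]
    refine ⟨rfl, ?_⟩
    rw [if_congr hc1 rfl rfl, if_congr hc2 rfl rfl, sgnl_cons, sgnl_cons, sgnl_nil]
    exact sign_juggle _ _



lemma eta_liftable : M.IsLiftable (eta cs) := by
  intro i j
  apply Equiv.ext
  rintro ⟨t, ε⟩
  rw [eta_pair_pow, cs.simple_mul_simple_pow i j, Equiv.Perm.one_apply]
  have hpair : (List.range (2 * M i j)).map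
      (fun a => ((cs.simple j * cs.simple i) ^ a : W) * cs.simple j)
      = ((List.range (M i j)).map
          (fun a => ((cs.simple j * cs.simple i) ^ a : W) * cs.simple j))
        ++ ((List.range (M i j)).map
          (fun a => ((cs.simple j * cs.simple i) ^ a : W) * cs.simple j)) := by
    rw [two_mul, List.range_add, List.map_append, List.map_map]
    congr 1
    apply List.map_congr_left
    intro a _
    simp only [Function.comp_apply]
    rw [pow_add, cs.simple_mul_simple_pow' i j, one_mul]
  rw [hpair, sgnl_append, Int.units_mul_self, mul_one]
  simp

/-- The sign representation of the Coxeter group on `W × ℤˣ`. -/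
noncomputable def rep : W →* Equiv.Perm (W × ℤˣ) :=
  cs.lift ⟨fun i => eta cs i, eta_liftable cs⟩

lemma rep_simple (i : B) : rep cs (cs.simple i) = eta cs i :=
  cs.lift_apply_simple (eta_liftable cs) i

lemma rep_wordProd (ω : List B) (t : W) (ε : ℤˣ) :
    rep cs (cs.wordProd ω) (t, ε) =
      (cs.wordProd ω * t * (cs.wordProd ω)⁻¹, ε * sgnl t (cs.rightInvSeq ω)) := by
  induction ω generalizing t ε with
  | nil => simp [sgnl]
  | cons i ω ih =>
    have hris : cs.rightInvSeq (i :: ω)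
        = (cs.wordProd ω)⁻¹ * cs.simple i * cs.wordProd ω :: cs.rightInvSeq ω := rfl
    rw [cs.wordProd_cons, map_mul, Equiv.Perm.mul_apply, ih, rep_simple, eta_apply, hris,
      sgnl_cons, Prod.mk.injEq]
    constructor
    · rw [mul_inv_rev, cs.inv_simple]
      group
    · by_cases hc : cs.wordProd ω * t * (cs.wordProd ω)⁻¹ = cs.simple i
      · have hc' : (cs.wordProd ω)⁻¹ * cs.simple i * cs.wordProd ω = t := by
          rw [← hc]; group
        rw [if_pos hc, if_pos hc']
        simp [mul_comm, mul_left_comm, mul_assoc]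
      · have hc' : ¬ ((cs.wordProd ω)⁻¹ * cs.simple i * cs.wordProd ω = t) := by
          intro h
          apply hc
          rw [← h]; group
        rw [if_neg hc, if_neg hc', one_mul]

/-- The sign `η(w; t)`. -/
noncomputable def sgnw (w t : W) : ℤˣ := (rep cs w (t, 1)).2

lemma rep_apply (w t : W) (ε : ℤˣ) :
    rep cs w (t, ε) = (w * t * w⁻¹, ε * sgnw cs w t) := by
  obtain ⟨ω, _, rfl⟩ := cs.exists_reduced_word' w
  rw [rep_wordProd, sgnw, rep_wordProd, one_mul]

lemma sgnw_eq_sgnl (ω : List B) (t : W) :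
    sgnw cs (cs.wordProd ω) t = sgnl t (cs.rightInvSeq ω) := by
  rw [sgnw, rep_wordProd, one_mul]

lemma mem_rightInvSeq_iff_sgnw {ω : List B} (hred : cs.IsReduced ω) (t : W) :
    t ∈ cs.rightInvSeq ω ↔ sgnw cs (cs.wordProd ω) t = -1 := by
  rw [sgnw_eq_sgnl]
  constructor
  · intro h
    exact sgnl_of_nodup_mem hred.nodup_rightInvSeq h
  · intro h
    by_contra hmem
    rw [sgnl_of_not_mem hmem] at h
    exact (by decide : (1 : ℤˣ) ≠ -1) h

lemma sgnw_reflection_self {t : W} (ht : cs.IsReflection t) : sgnw cs t t = -1 := by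
  obtain ⟨u, i, rfl⟩ := ht
  set t := u * cs.simple i * u⁻¹ with htdef
  have key : rep cs u (cs.simple i, 1) = (t, sgnw cs u (cs.simple i)) := by
    rw [rep_apply, one_mul]
  have hback : rep cs u⁻¹ (t, sgnw cs u (cs.simple i)) = (cs.simple i, 1) := by
    rw [← key, ← Equiv.Perm.mul_apply, ← map_mul, inv_mul_cancel, map_one,
      Equiv.Perm.one_apply]
  have hA : rep cs u⁻¹ (t, 1) = (cs.simple i, sgnw cs u⁻¹ t) := by
    rw [rep_apply, one_mul, Prod.mk.injEq]
    refine ⟨?_, rfl⟩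
    rw [htdef]; group
  have hsgns : sgnw cs u (cs.simple i) * sgnw cs u⁻¹ t = 1 := by
    have := hback
    rw [rep_apply] at this
    have h2 := congrArg Prod.snd this
    simpa [mul_comm] using h2
  have ht2 : rep cs t (t, 1) = (t, -(sgnw cs u⁻¹ t * sgnw cs u (cs.simple i))) := by
    have hd : rep cs t = rep cs u * rep cs (cs.simple i) * rep cs u⁻¹ := by
      rw [htdef, map_mul, map_mul]
    rw [hd, Equiv.Perm.mul_apply, Equiv.Perm.mul_apply, hA, rep_simple, eta_apply,
      if_pos rfl]
    rw [show cs.simple i * cs.simple i * cs.simple i = cs.simple i by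
      rw [cs.simple_mul_simple_self, one_mul]]
    rw [rep_apply, Prod.mk.injEq]
    constructor
    · rw [htdef]
    · simp [mul_comm, mul_left_comm]
  rw [sgnw, ht2]
  simp only
  rw [show sgnw cs u⁻¹ t * sgnw cs u (cs.simple i) = 1 by rw [mul_comm]; exact hsgns]

lemma sgnw_mul_reflection (w : W) {t : W} (ht : cs.IsReflection t) :
    sgnw cs (w * t) t = - sgnw cs w t := by
  have h1 : rep cs (w * t) (t, 1) = rep cs w (rep cs t (t, 1)) := by
    rw [map_mul, Equiv.Perm.mul_apply]
  have h2 : rep cs t (t, 1) = (t, -1) := by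
    rw [rep_apply, one_mul, sgnw_reflection_self cs ht, Prod.mk.injEq]
    refine ⟨by group, rfl⟩
  rw [sgnw, h1, h2, rep_apply]
  simp

/-- **Strong exchange property** (right version). -/
theorem strong_exchange_right {ω : List B} (hred : cs.IsReduced ω) {t : W}
    (ht : cs.IsReflection t)
    (hlt : cs.length (cs.wordProd ω * t) < cs.length (cs.wordProd ω)) :
    t ∈ cs.rightInvSeq ω := by
  rw [mem_rightInvSeq_iff_sgnw cs hred]
  rcases Int.units_eq_one_or (sgnw cs (cs.wordProd ω) t) with h1 | h1
  · exfalso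
    obtain ⟨ω', hred', heq⟩ := cs.exists_reduced_word' (cs.wordProd ω * t)
    have hmem : t ∈ cs.rightInvSeq ω' := by
      rw [mem_rightInvSeq_iff_sgnw cs hred', ← heq, sgnw_mul_reflection cs _ ht, h1]
    have h3 := (cs.isRightInversion_of_mem_rightInvSeq hred' hmem).2
    rw [← heq, mul_assoc, ht.mul_self, mul_one] at h3
    omega
  · exact h1

/-- Strong exchange, left version, in eraseIdx form. -/
theorem exchange_left {ω : List B} (hred : cs.IsReduced ω) {t : W}
    (ht : cs.IsReflection t)
    (hlt : cs.length (t * cs.wordProd ω) < cs.length (cs.wordProd ω)) :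
    ∃ j < ω.length, t * cs.wordProd ω = cs.wordProd (ω.eraseIdx j) := by
  have hrev : cs.IsReduced ω.reverse := (cs.isReduced_reverse_iff ω).mpr hred
  have h2 : cs.length (cs.wordProd ω.reverse * t) < cs.length (cs.wordProd ω.reverse) := by
    rw [cs.wordProd_reverse,
      show (cs.wordProd ω)⁻¹ * t = (t⁻¹ * cs.wordProd ω)⁻¹ by group,
      cs.length_inv, cs.length_inv, ht.inv]
    exact hlt
  have hmem := strong_exchange_right cs hrev ht h2
  rw [cs.rightInvSeq_reverse, List.mem_reverse] at hmem
  obtain ⟨j, hj, hget⟩ := List.mem_iff_getElem.mp hmem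
  have hj' : j < ω.length := by simpa using hj
  refine ⟨j, hj', ?_⟩
  have h3 := cs.getD_leftInvSeq_mul_wordProd ω j
  rw [List.getD_eq_getElem _ _ hj, hget] at h3
  exact h3

/-- Strong exchange, right version for a simple reflection, in eraseIdx form. -/
theorem exchange_right_idx {ω : List B} (hred : cs.IsReduced ω) (i : B)
    (hlt : cs.length (cs.wordProd ω * cs.simple i) < cs.length (cs.wordProd ω)) :
    ∃ j < ω.length, cs.wordProd ω * cs.simple i = cs.wordProd (ω.eraseIdx j) := by
  have hmem := strong_exchange_right cs hred (cs.isReflection_simple i) hlt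
  obtain ⟨j, hj, hget⟩ := List.mem_iff_getElem.mp hmem
  have hj' : j < ω.length := by simpa using hj
  refine ⟨j, hj', ?_⟩
  have h3 := cs.wordProd_mul_getD_rightInvSeq ω j
  rw [List.getD_eq_getElem _ _ hj, hget] at h3
  exact h3


/-- Every word contains a reduced word for the same element, using only its letters. -/
theorem exists_reduced_subword : ∀ (n : ℕ) (ω : List B), ω.length ≤ n →
    ∃ ω' : List B, (∀ x ∈ ω', x ∈ ω) ∧ cs.IsReduced ω' ∧ cs.wordProd ω' = cs.wordProd ω := by
  intro n
  induction n with
  | zero =>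
    intro ω h
    have : ω = [] := List.eq_nil_of_length_eq_zero (Nat.le_zero.mp h)
    subst this
    exact ⟨[], by simp, by simp [CoxeterSystem.IsReduced], rfl⟩
  | succ n ih =>
    intro ω hlen
    by_cases hred : cs.IsReduced ω
    · exact ⟨ω, fun x h => h, hred, rfl⟩
    · classical
      have hω0 : ω ≠ [] := by
        rintro rfl
        exact hred (by simp [CoxeterSystem.IsReduced])
      have hlenpos : 0 < ω.length := List.length_pos_iff.mpr hω0
      have hex : ∃ k, ¬ cs.IsReduced (ω.take (k + 1)) := by
        refine ⟨ω.length - 1, ?_⟩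
        rw [Nat.sub_add_cancel hlenpos, List.take_length]
        exact hred
      set k := Nat.find hex with hkdef
      have hk : ¬ cs.IsReduced (ω.take (k + 1)) := Nat.find_spec hex
      have hσ : cs.IsReduced (ω.take k) := by
        rcases Nat.eq_zero_or_pos k with h0 | h0
        · rw [h0]
          simp [CoxeterSystem.IsReduced]
        · have := Nat.find_min hex (show k - 1 < k by omega)
          rw [not_not] at this
          convert this using 2
          omega
      have hklen : k < ω.length := by
        have hfind : k ≤ ω.length - 1 := Nat.find_le (by
          rw [Nat.sub_add_cancel hlenpos, List.take_length]; exact hred)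
        omega
      have htake : ω.take (k + 1) = ω.take k ++ [ω[k]'hklen] := by
        rw [List.take_succ, List.getElem?_eq_getElem hklen]
        rfl
      have hlentake : (ω.take k).length = k := by
        rw [List.length_take]
        omega
      have hltake : cs.length (cs.wordProd (ω.take k)) = k := by
        have h5 := hσ
        rw [CoxeterSystem.IsReduced, hlentake] at h5
        exact h5
      have hdesc : cs.length (cs.wordProd (ω.take k) * cs.simple (ω[k]'hklen))
          < cs.length (cs.wordProd (ω.take k)) := by
        have h1 : ¬ (cs.length (cs.wordProd (ω.take k) * cs.simple (ω[k]'hklen)) = k + 1) := by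
          intro hc
          apply hk
          rw [CoxeterSystem.IsReduced, htake, cs.wordProd_append, cs.wordProd_singleton,
            List.length_append, hlentake]
          simpa using hc
        rcases cs.length_mul_simple (cs.wordProd (ω.take k)) (ω[k]'hklen) with h | h
        · rw [hltake] at h
          exact absurd h h1
        · omega
      obtain ⟨j, hj, heq⟩ := exchange_right_idx cs hσ _ hdesc
      set ω'' : List B := (ω.take k).eraseIdx j ++ ω.drop (k + 1) with hw''
      have hlen'' : ω''.length ≤ n := by
        rw [hw'', List.length_append]
        have h1 : ((ω.take k).eraseIdx j).length + 1 = (ω.take k).length :=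
          List.length_eraseIdx_add_one (by omega)
        have h2 : (ω.drop (k + 1)).length = ω.length - (k + 1) := List.length_drop
        omega
      have hprod : cs.wordProd ω'' = cs.wordProd ω := by
        rw [hw'', cs.wordProd_append, ← heq]
        conv_rhs => rw [← List.take_append_drop (k + 1) ω]
        rw [cs.wordProd_append, htake, cs.wordProd_append, cs.wordProd_singleton]
      obtain ⟨ω', hsub, hred', hprod'⟩ := ih ω'' hlen''
      refine ⟨ω', ?_, hred', by rw [hprod', hprod]⟩
      intro x hx
      rcases List.mem_append.mp (hsub x hx) with h | h
      · exact (List.take_sublist k ω).subset ((List.eraseIdx_sublist _ j).subset h)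
      · exact (List.drop_sublist (k + 1) ω).subset h

theorem exists_reduced_subword' (ω : List B) :
    ∃ ω' : List B, (∀ x ∈ ω', x ∈ ω) ∧ cs.IsReduced ω' ∧ cs.wordProd ω' = cs.wordProd ω :=
  exists_reduced_subword cs ω.length ω le_rfl

lemma simple_mem_WJ {J : Set B} {i : B} (hi : i ∈ J) : cs.simple i ∈ WJ cs J :=
  Subgroup.subset_closure ⟨i, hi, rfl⟩

lemma wordProd_mem_WJ {J : Set B} {ω : List B} (h : ∀ x ∈ ω, x ∈ J) :
    cs.wordProd ω ∈ WJ cs J := by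
  induction ω with
  | nil => rw [cs.wordProd_nil]; exact one_mem _
  | cons i ω ih =>
    rw [cs.wordProd_cons]
    exact mul_mem (simple_mem_WJ cs (h i List.mem_cons_self))
      (ih fun x hx => h x (List.mem_cons_of_mem _ hx))

lemma exists_word_over {J : Set B} {u : W} (hu : u ∈ WJ cs J) :
    ∃ ω : List B, (∀ x ∈ ω, x ∈ J) ∧ cs.wordProd ω = u := by
  refine Subgroup.closure_induction ?_ ?_ ?_ ?_ hu
  · rintro x ⟨i, hiJ, rfl⟩
    exact ⟨[i], by simpa using hiJ, by simp⟩
  · exact ⟨[], by simp, by simp⟩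
  · rintro x y _ _ ⟨ω₁, h₁, rfl⟩ ⟨ω₂, h₂, rfl⟩
    refine ⟨ω₁ ++ ω₂, ?_, (cs.wordProd_append ω₁ ω₂)⟩
    intro x hx
    rcases List.mem_append.mp hx with h | h
    · exact h₁ x h
    · exact h₂ x h
  · rintro x _ ⟨ω, h, rfl⟩
    exact ⟨ω.reverse, fun x hx => h x (List.mem_reverse.mp hx), cs.wordProd_reverse ω⟩

lemma exists_reduced_word_over {J : Set B} {u : W} (hu : u ∈ WJ cs J) :
    ∃ ω : List B, (∀ x ∈ ω, x ∈ J) ∧ cs.IsReduced ω ∧ cs.wordProd ω = u := by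
  obtain ⟨ω₀, hJ₀, rfl⟩ := exists_word_over cs hu
  obtain ⟨ω, hsub, hred, hprod⟩ := exists_reduced_subword' cs ω₀
  exact ⟨ω, fun x hx => hJ₀ x (hsub x hx), hred, hprod⟩


theorem length_wordProd_mul_of_minRep {J : Set B} {w : W} (hw : IsMinRep cs J w) :
    ∀ ω : List B, (∀ x ∈ ω, x ∈ J) → cs.IsReduced ω →
      cs.length (cs.wordProd ω * w) = ω.length + cs.length w := by
  intro ω
  induction ω with
  | nil => intro _ _; simp
  | cons i ω' ih =>
    intro hJ hred
    have hred' : cs.IsReduced ω' := by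
      have := CoxeterSystem.IsReduced.drop hred 1
      simpa using this
    have hJ' : ∀ x ∈ ω', x ∈ J := fun x hx => hJ x (List.mem_cons_of_mem _ hx)
    have hIH := ih hJ' hred'
    rw [cs.wordProd_cons, mul_assoc]
    rcases cs.length_simple_mul (cs.wordProd ω' * w) i with h | h
    · rw [h, hIH, List.length_cons]
      omega
    · exfalso
      obtain ⟨ωw, hredw, hweq⟩ := cs.exists_reduced_word' w
      have h10 : cs.length w = ωw.length := by rw [hweq]; exact hredw
      have hc : cs.wordProd (ω' ++ ωw) = cs.wordProd ω' * w := by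
        rw [cs.wordProd_append, ← hweq]
      have hcred : cs.IsReduced (ω' ++ ωw) := by
        rw [CoxeterSystem.IsReduced, hc, hIH, List.length_append]
        omega
      have hlt : cs.length (cs.simple i * cs.wordProd (ω' ++ ωw))
          < cs.length (cs.wordProd (ω' ++ ωw)) := by
        rw [hc]; omega
      obtain ⟨j, hj, heq⟩ := exchange_left cs hcred (cs.isReflection_simple i) hlt
      rw [hc] at heq
      rcases lt_or_ge j ω'.length with hjlt | hjge
      · rw [List.eraseIdx_append_of_lt_length hjlt, cs.wordProd_append, ← hweq] at heq
        have h2 : cs.simple i * cs.wordProd ω' = cs.wordProd (ω'.eraseIdx j) :=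
          mul_right_cancel (b := w) (by rw [mul_assoc, heq])
        have h3 : cs.length (cs.simple i * cs.wordProd ω') = ω'.length + 1 := by
          have h4 := hred
          rw [CoxeterSystem.IsReduced, cs.wordProd_cons, List.length_cons] at h4
          exact h4
        have h5 : cs.length (cs.wordProd (ω'.eraseIdx j)) ≤ (ω'.eraseIdx j).length :=
          cs.length_wordProd_le _
        have h6 : (ω'.eraseIdx j).length + 1 = ω'.length := List.length_eraseIdx_add_one hjlt
        rw [h2] at h3
        omega
      · rw [List.eraseIdx_append_of_length_le hjge, cs.wordProd_append] at heq
        have h2 : ((cs.wordProd ω')⁻¹ * cs.simple i * cs.wordProd ω') * w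
            = cs.wordProd (ωw.eraseIdx (j - ω'.length)) := by
          rw [show ((cs.wordProd ω')⁻¹ * cs.simple i * cs.wordProd ω') * w
            = (cs.wordProd ω')⁻¹ * (cs.simple i * (cs.wordProd ω' * w)) by group, heq]
          group
        have hvmem : (cs.wordProd ω')⁻¹ * cs.simple i * cs.wordProd ω' ∈ WJ cs J :=
          mul_mem (mul_mem (inv_mem (wordProd_mem_WJ cs hJ'))
            (simple_mem_WJ cs (hJ i List.mem_cons_self))) (wordProd_mem_WJ cs hJ')
        have h7 := hw _ hvmem
        rw [h2] at h7
        have h8 := cs.length_wordProd_le (ωw.eraseIdx (j - ω'.length))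
        have h9 : (ωw.eraseIdx (j - ω'.length)).length + 1 = ωw.length := by
          apply List.length_eraseIdx_add_one
          rw [List.length_append] at hj
          omega
        omega

theorem length_mul_of_minRep {J : Set B} {w : W} (hw : IsMinRep cs J w) {u : W}
    (hu : u ∈ WJ cs J) : cs.length (u * w) = cs.length u + cs.length w := by
  obtain ⟨ω, hJ, hred, rfl⟩ := exists_reduced_word_over cs hu
  rw [length_wordProd_mul_of_minRep cs hw ω hJ hred,
    show cs.length (cs.wordProd ω) = ω.length from hred]

lemma isMinRep_mul_simple_of_lt {J : Set B} {w : W} (hw : IsMinRep cs J w) {i : B}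
    (h : cs.length (w * cs.simple i) < cs.length w) : IsMinRep cs J (w * cs.simple i) := by
  intro u hu
  have h1 : cs.length (u * w) = cs.length u + cs.length w := length_mul_of_minRep cs hw hu
  rw [show u * (w * cs.simple i) = (u * w) * cs.simple i from (mul_assoc u w _).symm]
  rcases cs.length_mul_simple (u * w) i with h3 | h3 <;> omega

theorem deodhar {J : Set B} {w : W} (hw : IsMinRep cs J w) (i : B)
    (hni : ¬ IsMinRep cs J (w * cs.simple i)) :
    ∃ v ∈ WJ cs J, w * cs.simple i = v * w := by
  have hne := cs.length_mul_simple_ne w i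
  have hgt : cs.length (w * cs.simple i) = cs.length w + 1 := by
    rcases cs.length_mul_simple w i with h | h
    · exact h
    · exact absurd (isMinRep_mul_simple_of_lt cs hw (by omega)) hni
  simp only [IsMinRep, not_forall] at hni
  push_neg at hni
  obtain ⟨u, huJ, hult⟩ := hni
  have e1 : cs.length (u * w) = cs.length u + cs.length w := length_mul_of_minRep cs hw huJ
  have hu1 : cs.length u = 1 := by
    have h3 : cs.length u ≠ 0 := by
      intro h0
      rw [cs.length_eq_zero_iff] at h0
      subst h0
      rw [one_mul] at hult
      omega
    rw [show u * (w * cs.simple i) = (u * w) * cs.simple i from (mul_assoc u w _).symm] at hult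
    rcases cs.length_mul_simple (u * w) i with h4 | h4 <;> omega
  obtain ⟨ωu, hJu, hredu, hueq⟩ := exists_reduced_word_over cs huJ
  have hlu : ωu.length = 1 := by
    rw [CoxeterSystem.IsReduced, hueq] at hredu
    omega
  obtain ⟨j0, hj0⟩ := List.length_eq_one_iff.mp hlu
  have hj0J : j0 ∈ J := hJu j0 (by rw [hj0]; exact List.mem_singleton_self j0)
  have huval : u = cs.simple j0 := by rw [← hueq, hj0, cs.wordProd_singleton]
  obtain ⟨ωw, hredw, hweq⟩ := cs.exists_reduced_word' w
  have h6 : cs.length w = ωw.length := by rw [hweq]; exact hredw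
  have hredwi : cs.IsReduced (ωw.concat i) := by
    rw [CoxeterSystem.IsReduced, cs.wordProd_concat, ← hweq, hgt, List.length_concat]
    omega
  have hlt2 : cs.length (cs.simple j0 * cs.wordProd (ωw.concat i))
      < cs.length (cs.wordProd (ωw.concat i)) := by
    rw [cs.wordProd_concat, ← hweq]
    rw [huval] at hult
    rw [show cs.simple j0 * (w * cs.simple i)
      = cs.simple j0 * (w * cs.simple i) from rfl]
    exact hult
  obtain ⟨j1, hj1, heq⟩ := exchange_left cs hredwi (cs.isReflection_simple j0) hlt2
  rw [List.concat_eq_append] at heq hj1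
  rcases lt_or_ge j1 ωw.length with hjlt | hjge
  · exfalso
    rw [List.eraseIdx_append_of_lt_length hjlt, cs.wordProd_append, cs.wordProd_append,
      cs.wordProd_singleton, ← hweq] at heq
    have h2 : cs.simple j0 * w = cs.wordProd (ωw.eraseIdx j1) :=
      mul_right_cancel (b := cs.simple i) (by rw [mul_assoc, heq])
    have h3 := hw _ (simple_mem_WJ cs hj0J)
    have h4 := cs.length_wordProd_le (ωw.eraseIdx j1)
    have h5 : (ωw.eraseIdx j1).length + 1 = ωw.length := List.length_eraseIdx_add_one hjlt
    rw [h2] at h3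
    omega
  · have hj1e : j1 - ωw.length = 0 := by
      rw [List.length_append, List.length_singleton] at hj1
      omega
    rw [List.eraseIdx_append_of_length_le hjge, hj1e, cs.wordProd_append,
      cs.wordProd_singleton, ← hweq] at heq
    have h7 : cs.wordProd (ωw ++ List.eraseIdx [i] 0) = w := by
      rw [cs.wordProd_append, ← hweq]
      simp
    rw [h7] at heq
    refine ⟨cs.simple j0, simple_mem_WJ cs hj0J, ?_⟩
    have h8 : cs.simple j0 * (cs.simple j0 * (w * cs.simple i)) = cs.simple j0 * w := by
      rw [heq]
    rw [← mul_assoc, cs.simple_mul_simple_self, one_mul] at h8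
    exact h8


lemma phi_step {J : Set B} {w : W} (hw : IsMinRep cs J w) (i : B) (bb : Bool) :
    IsMinRep cs J (phiJ cs J i bb w) ∧
    ∀ u ∈ WJ cs J, ∃ u' ∈ WJ cs J, phi cs i bb (u * w) = u' * phiJ cs J i bb w := by
  by_cases hm : IsMinRep cs J (w * cs.simple i)
  · have hmul : mulJ cs J w i = w * cs.simple i := by rw [mulJ, if_pos hm]
    constructor
    · rw [phiJ, hmul]
      split_ifs <;> first | exact hm | exact hw
    · intro u hu
      refine ⟨u, hu, ?_⟩
      have e1 := length_mul_of_minRep cs hw hu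
      have e2 : cs.length (u * (w * cs.simple i)) = cs.length u + cs.length (w * cs.simple i) :=
        length_mul_of_minRep cs hm hu
      have ha : u * w * cs.simple i = u * (w * cs.simple i) := mul_assoc u w _
      rw [phi, phiJ, hmul]
      by_cases hb : bb
      · rw [if_pos hb, if_pos hb]
        by_cases hc : cs.length w ≤ cs.length (w * cs.simple i)
        · rw [if_pos hc, if_pos (by rw [ha, e2, e1]; omega), ha]
        · rw [if_neg hc, if_neg (by rw [ha, e2, e1]; omega)]
      · rw [if_neg hb, if_neg hb]
        by_cases hc : cs.length (w * cs.simple i) ≤ cs.length w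
        · rw [if_pos hc, if_pos (by rw [ha, e2, e1]; omega), ha]
        · rw [if_neg hc, if_neg (by rw [ha, e2, e1]; omega)]
  · have hmul : mulJ cs J w i = w := by rw [mulJ, if_neg hm]
    have hphiJ : phiJ cs J i bb w = w := by
      rw [phiJ, hmul]
      split_ifs <;> rfl
    rw [hphiJ]
    refine ⟨hw, ?_⟩
    intro u hu
    obtain ⟨v, hv, hvw⟩ := deodhar cs hw i hm
    rw [phi]
    split_ifs <;>
      first
        | exact ⟨u, hu, rfl⟩
        | exact ⟨u * v, mul_mem hu hv, by rw [mul_assoc, hvw, ← mul_assoc]⟩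

lemma phiUpTo_zero {n : ℕ} (σ : Fin n → B) (b : Fin n → Bool) (w : W) :
    phiUpTo cs σ b 0 w = w := by
  simp [phiUpTo]

lemma phiJUpTo_zero (J : Set B) {n : ℕ} (σ : Fin n → B) (b : Fin n → Bool) (w : W) :
    phiJUpTo cs J σ b 0 w = w := by
  simp [phiJUpTo]

lemma phiUpTo_succ {n : ℕ} (σ : Fin n → B) (b : Fin n → Bool) {k : ℕ} (hk : k < n) (w : W) :
    phiUpTo cs σ b (k + 1) w
      = phi cs (σ ⟨k, hk⟩) (b ⟨k, hk⟩) (phiUpTo cs σ b k w) := by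
  rw [phiUpTo, phiUpTo, List.take_succ,
    List.getElem?_eq_getElem (by simpa using hk), List.getElem_ofFn]
  simp [List.foldl_append]

lemma phiJUpTo_succ (J : Set B) {n : ℕ} (σ : Fin n → B) (b : Fin n → Bool) {k : ℕ}
    (hk : k < n) (w : W) :
    phiJUpTo cs J σ b (k + 1) w
      = phiJ cs J (σ ⟨k, hk⟩) (b ⟨k, hk⟩) (phiJUpTo cs J σ b k w) := by
  rw [phiJUpTo, phiJUpTo, List.take_succ,
    List.getElem?_eq_getElem (by simpa using hk), List.getElem_ofFn]
  simp [List.foldl_append]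

lemma main_invariant (J : Set B) {n : ℕ} (σ : Fin n → B) (b : Fin n → Bool) (wbar : W)
    (hbar : IsMinRep cs J wbar) :
    ∀ k, k ≤ n → IsMinRep cs J (phiJUpTo cs J σ b k wbar) ∧
      ∀ u ∈ WJ cs J, ∃ u' ∈ WJ cs J,
        phiUpTo cs σ b k (u * wbar) = u' * phiJUpTo cs J σ b k wbar := by
  intro k
  induction k with
  | zero =>
    intro _
    refine ⟨by rw [phiJUpTo_zero]; exact hbar, fun u hu => ⟨u, hu, ?_⟩⟩
    rw [phiUpTo_zero, phiJUpTo_zero]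
  | succ k ih =>
    intro hk1
    have hk : k < n := hk1
    obtain ⟨hmin, hcos⟩ := ih (le_of_lt hk)
    constructor
    · rw [phiJUpTo_succ cs J σ b hk]
      exact (phi_step cs hmin (σ ⟨k, hk⟩) (b ⟨k, hk⟩)).1
    · intro u hu
      obtain ⟨u', hu', he⟩ := hcos u hu
      obtain ⟨u'', hu'', he2⟩ := (phi_step cs hmin (σ ⟨k, hk⟩) (b ⟨k, hk⟩)).2 u' hu'
      exact ⟨u'', hu'', by
        rw [phiUpTo_succ cs σ b hk, he, he2, phiJUpTo_succ cs J σ b hk]⟩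

end Aux

/-- For `J ⊆ S`, `w̄ ∈ ᴶW`, a word `σ` and `b ∈ {0,1}^n`: for every
`u ∈ W_J` one has `φ_{σ,b}(u·w̄) ∈ W_J · φ_{J,σ,b}(w̄)`. In particular, if
`φ_{J,σ,b}(w̄) = w̄` then `φ_{σ,b}` maps the coset `W_J w̄` into itself. -/

theorem phiSeq_coset {B W : Type*} [Group W] {M : CoxeterMatrix B}
    (cs : CoxeterSystem M W) (J : Set B) {n : ℕ} (σ : Fin n → B) (b : Fin n → Bool)
    (wbar : W) (hbar : IsMinRep cs J wbar) :
    (∀ u ∈ WJ cs J, ∃ u' ∈ WJ cs J,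
        phiSeq cs σ b (u * wbar) = u' * phiJSeq cs J σ b wbar) ∧
    (phiJSeq cs J σ b wbar = wbar →
      ∀ u ∈ WJ cs J, ∃ u' ∈ WJ cs J, phiSeq cs σ b (u * wbar) = u' * wbar) := by
  constructor
  · intro u hu
    exact (main_invariant cs J σ b wbar hbar n le_rfl).2 u hu
  · intro hfix u hu
    obtain ⟨u', hu', he⟩ := (main_invariant cs J σ b wbar hbar n le_rfl).2 u hu
    exact ⟨u', hu', he.trans (congrArg (fun z => u' * z) hfix)⟩

end Paper
end

section
/- Let w ∈ W, let α ∈ Φ(w), and let β ∈ Φ^+ ∖ Φ(w) be such that α + β ∈ Φ(w). Then w^{-1}(α) ∉ −Δ; equivalently, w^{-1} s_α w is not a simple reflection. -/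
namespace Paper

/-- `v` is a nonnegative integer combination of elements of `D`. -/
def IsNNComb {V : Type*} [AddCommMonoid V] (D : Set V) (v : V) : Prop :=
  ∃ c : V →₀ ℕ, ↑c.support ⊆ D ∧ v = c.sum fun x m => m • x

lemma key {V : Type*} [AddCommGroup V] [Module ℝ V] (Δ : Finset V)
    (hlin : LinearIndependent ℝ (fun d : Δ => (d : V)))
    (δ : V) (hδ : δ ∈ Δ) (v : V) (hv : IsNNComb (↑Δ) v)
    (hv' : IsNNComb (↑Δ) (δ - v)) (hv0 : v ≠ 0) : v = δ := by
  classical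
  obtain ⟨c, hc, hcv⟩ := hv
  obtain ⟨d, hd, hdv⟩ := hv'
  have hlin' : LinearIndependent ℝ (fun x => x : (↑Δ : Set V) → V) := hlin
  rw [linearIndependent_subtype_iff, linearIndepOn_iff] at hlin'
  set cR : V →₀ ℝ := c.mapRange Nat.cast Nat.cast_zero with hcR
  set dR : V →₀ ℝ := d.mapRange Nat.cast Nat.cast_zero with hdR
  have hcomb : ∀ (e : V →₀ ℕ),
      Finsupp.linearCombination ℝ (id : V → V) (e.mapRange Nat.cast Nat.cast_zero)
        = e.sum fun x m => m • x := by
    intro e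
    rw [Finsupp.linearCombination_apply, Finsupp.sum_mapRange_index (by simp)]
    exact Finsupp.sum_congr fun x _ => by simp [Nat.cast_smul_eq_nsmul]
  set f : V →₀ ℝ := cR + dR - Finsupp.single δ 1 with hf
  have hfsupp : f ∈ Finsupp.supported ℝ ℝ (↑Δ : Set V) := by
    intro x hx
    have h1 := Finsupp.support_sub (f := cR + dR) (g := Finsupp.single δ 1) hx
    rcases Finset.mem_union.1 h1 with h | h
    · rcases Finset.mem_union.1 (Finsupp.support_add h) with h | h
      · exact hc (by simpa [hcR] using Finsupp.support_mapRange h)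
      · exact hd (by simpa [hdR] using Finsupp.support_mapRange h)
    · have := Finsupp.support_single_subset h
      simp only [Finset.mem_singleton] at this
      subst this; exact hδ
  have hf0 : f = 0 := by
    apply hlin' f hfsupp
    rw [hf]
    simp only [map_sub, map_add]
    rw [hcomb c, hcomb d, ← hcv, ← hdv]
    simp
  have heq : ∀ x : V, (c x : ℝ) + d x = (Finsupp.single δ 1 : V →₀ ℝ) x := by
    intro x
    have h2 := sub_eq_zero.1 hf0
    have h3 := DFunLike.congr_fun h2 x
    simpa [hcR, hdR] using h3
  have hcx : ∀ x, x ≠ δ → c x = 0 := by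
    intro x hx
    have h4 := heq x
    rw [Finsupp.single_apply, if_neg (fun h => hx h.symm)] at h4
    have h5 : ((c x + d x : ℕ) : ℝ) = 0 := by push_cast; linarith
    have := Nat.cast_eq_zero.1 h5
    omega
  have hcδ1 : c δ + d δ = 1 := by
    have h4 := heq δ
    rw [Finsupp.single_apply, if_pos rfl] at h4
    have h5 : ((c δ + d δ : ℕ) : ℝ) = 1 := by push_cast; linarith
    exact_mod_cast h5
  have hcsingle : c = Finsupp.single δ (c δ) := by
    ext x
    by_cases hx : x = δ
    · subst hx; simp
    · rw [hcx x hx, Finsupp.single_apply, if_neg (fun h => hx h.symm)]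
  have hvδ : v = c δ • δ := by
    rw [hcv]
    conv_lhs => rw [hcsingle]
    rw [Finsupp.sum_single_index (by simp)]
  have hcδ : c δ = 1 := by
    rcases Nat.lt_or_ge (c δ) 1 with h | h
    · exfalso; apply hv0; rw [hvδ]; simp [Nat.lt_one_iff.1 h]
    · omega
  rw [hvδ, hcδ, one_smul]

/-- Let `Φ` be a reduced crystallographic root system with base `Δ`,
positive roots `Φ⁺` (the roots that are nonnegative integer combinations of `Δ`), and
let `w` be an element of the Weyl group (an invertible linear map preserving `Φ`).
If `α ∈ Φ(w)`, `β ∈ Φ⁺ ∖ Φ(w)` and `α + β ∈ Φ(w)`, where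
`Φ(w) = {γ ∈ Φ⁺ : w⁻¹(γ) ∈ Φ⁻}`, then `w⁻¹(α) ∉ −Δ`; equivalently, `w⁻¹ s_α w` is not
a simple reflection. -/
theorem stmt9 {V : Type*} [AddCommGroup V] [Module ℝ V]
    (Φ Δ : Finset V)
    (hΔΦ : (↑Δ : Set V) ⊆ ↑Φ)
    (h0 : (0 : V) ∉ Φ)
    (hlin : LinearIndependent ℝ (fun d : Δ => (d : V)))
    (hsplit : ∀ γ ∈ Φ, IsNNComb (↑Δ) γ ∨ IsNNComb (↑Δ) (-γ))
    (g : V ≃ₗ[ℝ] V)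
    (hg : ∀ γ ∈ Φ, g γ ∈ Φ) (hg' : ∀ γ ∈ Φ, g.symm γ ∈ Φ)
    (α β : V)
    (hα : α ∈ Φ) (hαpos : IsNNComb (↑Δ) α) (hαw : IsNNComb (↑Δ) (-(g.symm α)))
    (hβ : β ∈ Φ) (hβpos : IsNNComb (↑Δ) β) (hβw : ¬ IsNNComb (↑Δ) (-(g.symm β)))
    (hαβ : α + β ∈ Φ) (hαβpos : IsNNComb (↑Δ) (α + β))
    (hαβw : IsNNComb (↑Δ) (-(g.symm (α + β)))) :
    -(g.symm α) ∉ Δ := by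
  intro hδ
  have hβ' : g.symm β ∈ Φ := hg' β hβ
  have hβcomb : IsNNComb (↑Δ) (g.symm β) := (hsplit _ hβ').resolve_right hβw
  have hsum : g.symm (α + β) = g.symm α + g.symm β := map_add _ _ _
  have hδv : IsNNComb (↑Δ) ((-(g.symm α)) - g.symm β) := by
    have h1 := hαβw
    rw [hsum] at h1
    have : (-(g.symm α)) - g.symm β = -(g.symm α + g.symm β) := by abel
    rw [this]; exact h1
  have hv0 : g.symm β ≠ 0 := by
    intro h; rw [h] at hβ'; exact h0 hβ'
  have hvδ : g.symm β = -(g.symm α) := key Δ hlin _ hδ _ hβcomb hδv hv0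
  have : α + β = 0 := by
    have : g.symm (α + β) = 0 := by rw [hsum, hvδ]; abel
    have h2 := congrArg g this
    simpa using h2
  rw [this] at hαβ
  exact h0 hαβ

end Paper
end
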